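/- arXiv:1102.3491 — 3 statements merged into one kernel-verified Lean document; each statement's English description precedes it below -/
import Mathlib

section
/- Let M be a strongly base orderable matroid. Then for every pair of bases I and J of M there exists a bijection π : I → J such that π(x) = x for every x ∈ I ∩ J and such that for every K ⊆ I, the set π(K) ∪ (I \ K) is a base of M. -/
/-- A matroid is strongly base orderable if for every pair of bases `I`, `J` there is a
bijection `π : I → J` such that for every `K ⊆ I`, the set `π(K) ∪ (I \ K)` is a base. -/
def Matroid.StronglyBaseOrderable {α : Type*} (M : Matroid α) : Prop :=
  ∀ I J : Set α, M.IsBase I → M.IsBase J →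
    ∃ π : α → α, Set.BijOn π I J ∧ ∀ K ⊆ I, M.IsBase (π '' K ∪ (I \ K))

variable {α : Type*}

theorem stronglyBaseOrderable_exists_id_on_inter
    (M : Matroid α) (hsbo : M.StronglyBaseOrderable)
    (I J : Set α) (hI : M.IsBase I) (hJ : M.IsBase J) :
    ∃ π : α → α, Set.BijOn π I J ∧ (∀ x ∈ I ∩ J, π x = x) ∧
      ∀ K ⊆ I, M.IsBase (π '' K ∪ (I \ K)) := by
  classical
  obtain ⟨π, hbij, hbase⟩ := hsbo I J hI hJ
  -- Step 1 : π '' (I \ J) ∪ (I ∩ J) = J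
  have hJeq : π '' (I \ J) ∪ (I ∩ J) = J := by
    have hb := hbase (I \ J) Set.diff_subset
    rw [Set.diff_diff_right_self] at hb
    refine hb.eq_of_subset_isBase hJ (Set.union_subset ?_ Set.inter_subset_right)
    rw [← hbij.image_eq]
    exact Set.image_mono Set.diff_subset
  -- Step 2 : π maps I ∩ J into I ∩ J
  have hmem : ∀ z ∈ I ∩ J, π z ∈ I ∩ J := by
    intro z hz
    have hπz : π z ∈ J := hbij.mapsTo hz.1
    by_contra hcon
    rw [← hJeq] at hπz
    rcases hπz with h | h
    · obtain ⟨w, hw, hwz⟩ := h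
      have := hbij.injOn hw.1 hz.1 hwz
      exact hw.2 (this ▸ hz.2)
    · exact hcon h
  -- Step 3 : π maps I \ J into J \ I
  have hdiff : ∀ x ∈ I \ J, π x ∈ J \ I := by
    intro x hx
    refine ⟨hbij.mapsTo hx.1, fun hπxI => ?_⟩
    have hπx : π x ∈ I ∩ J := ⟨hπxI, hbij.mapsTo hx.1⟩
    have hiter : ∀ n, π^[n+1] x ∈ I ∩ J := by
      intro n
      induction n with
      | zero => simpa using hπx
      | succ m ih =>
        rw [Function.iterate_succ_apply']
        exact hmem _ ih
    set K : Set α := Set.range (fun n => π^[n] x) with hKdef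
    have hxK : x ∈ K := ⟨0, rfl⟩
    have hKI : K ⊆ I := by
      rintro _ ⟨n, rfl⟩
      cases n with
      | zero => exact hx.1
      | succ m => exact (hiter m).1
    have himg : π '' K = K \ {x} := by
      apply Set.Subset.antisymm
      · rintro _ ⟨_, ⟨n, rfl⟩, rfl⟩
        constructor
        · exact ⟨n + 1, Function.iterate_succ_apply' π n x⟩
        · simp only [Set.mem_singleton_iff]
          intro h
          have hh := hiter n
          rw [Function.iterate_succ_apply', h] at hh
          exact hx.2 hh.2
      · rintro y ⟨⟨n, rfl⟩, hy⟩
        cases n with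
        | zero => exact absurd rfl hy
        | succ m =>
          exact ⟨π^[m] x, ⟨m, rfl⟩, (Function.iterate_succ_apply' π m x).symm⟩
    have hb := hbase K hKI
    rw [himg] at hb
    have heq : K \ {x} ∪ (I \ K) = I \ {x} := by
      ext a
      simp only [Set.mem_union, Set.mem_diff, Set.mem_singleton_iff]
      constructor
      · rintro (⟨h1, h2⟩ | ⟨h1, h2⟩)
        · exact ⟨hKI h1, h2⟩
        · exact ⟨h1, fun h => h2 (h ▸ hxK)⟩
      · rintro ⟨h1, h2⟩
        by_cases hKa : a ∈ K
        · exact Or.inl ⟨hKa, h2⟩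
        · exact Or.inr ⟨h1, hKa⟩
    rw [heq] at hb
    have hIx := hb.eq_of_subset_isBase hI Set.diff_subset
    exact (hIx.symm.subset hx.1).2 rfl
  -- Define the new bijection
  set π' : α → α := fun x => if x ∈ I ∩ J then x else π x with hπ'def
  have hfix : ∀ x ∈ I ∩ J, π' x = x := fun x hx => if_pos hx
  have hmov : ∀ x ∉ I ∩ J, π' x = π x := fun x hx => if_neg hx
  have hmov' : ∀ x ∈ I \ J, π' x = π x := fun x hx => hmov x fun h => hx.2 h.2
  refine ⟨π', ⟨?_, ?_, ?_⟩, hfix, ?_⟩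
  · -- MapsTo
    intro x hx
    by_cases h : x ∈ I ∩ J
    · rw [hfix x h]; exact h.2
    · rw [hmov x h]; exact hbij.mapsTo hx
  · -- InjOn
    intro x hx y hy hxy
    by_cases h1 : x ∈ I ∩ J <;> by_cases h2 : y ∈ I ∩ J
    · rwa [hfix x h1, hfix y h2] at hxy
    · rw [hfix x h1, hmov y h2] at hxy
      exact absurd (hxy ▸ h1.1) (hdiff y ⟨hy, fun h => h2 ⟨hy, h⟩⟩).2
    · rw [hmov x h1, hfix y h2] at hxy
      exact absurd (hxy ▸ h2.1) (hdiff x ⟨hx, fun h => h1 ⟨hx, h⟩⟩).2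
    · rw [hmov x h1, hmov y h2] at hxy
      exact hbij.injOn hx hy hxy
  · -- SurjOn
    intro y hy
    by_cases h : y ∈ I ∩ J
    · exact ⟨y, h.1, hfix y h⟩
    · have hyJI : y ∈ J \ I := ⟨hy, fun hI' => h ⟨hI', hy⟩⟩
      obtain ⟨x, hxI, hxy⟩ := hbij.surjOn hy
      have hxIJ : x ∉ I ∩ J := fun hx => hyJI.2 (hxy ▸ (hmem x hx).1)
      exact ⟨x, hxI, (hmov x hxIJ).trans hxy⟩
  · -- base exchange property
    intro K hK
    have himg : π' '' K = (K ∩ J) ∪ π '' (K \ J) := by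
      conv_lhs => rw [← Set.inter_union_diff K J]
      rw [Set.image_union]
      congr 1
      · ext y
        constructor
        · rintro ⟨x, hx, rfl⟩
          rwa [hfix x ⟨hK hx.1, hx.2⟩]
        · intro hy
          exact ⟨y, hy, hfix y ⟨hK hy.1, hy.2⟩⟩
      · exact Set.image_congr fun x hx => hmov' x ⟨hK hx.1, hx.2⟩
    rw [himg]
    have heq : (K ∩ J) ∪ π '' (K \ J) ∪ (I \ K) = π '' (K \ J) ∪ (I \ (K \ J)) := by
      ext a
      simp only [Set.mem_union, Set.mem_inter_iff, Set.mem_diff]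
      constructor
      · rintro ((⟨h1, h2⟩ | h) | ⟨h1, h2⟩)
        · exact Or.inr ⟨hK h1, fun hh => hh.2 h2⟩
        · exact Or.inl h
        · exact Or.inr ⟨h1, fun hh => h2 hh.1⟩
      · rintro (h | ⟨h1, h2⟩)
        · exact Or.inl (Or.inr h)
        · by_cases hKa : a ∈ K
          · exact Or.inl (Or.inl ⟨hKa, by_contra fun hJ' => h2 ⟨hKa, hJ'⟩⟩)
          · exact Or.inr ⟨h1, hKa⟩
    rw [heq]
    exact hbase (K \ J) (Set.diff_subset.trans hK)
end

section
/- Let M be a strongly base orderable matroid on ground set S, let e ∈ S, and let f ∉ S. Let N be a matroid on ground set S ∪ {f} whose independent sets are exactly: the sets I ⊆ S that are independent in M, together with the sets I ⊆ S ∪ {f} with f ∈ I and e ∉ I such that (I \ {f}) ∪ {e} is independent in M. Then N is strongly base orderable. (That is, strong base orderability is closed under parallel extensions.) -/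
variable {α : Type*}

private lemma swap_image_of_not_mem [DecidableEq α] {e f : α} {A : Set α} (he : e ∉ A) (hf : f ∉ A) :
    (Equiv.swap e f) '' A = A := by
  rw [Equiv.image_eq_preimage_symm, Equiv.symm_swap]
  ext x
  simp only [Set.mem_preimage, Equiv.swap_apply_def]
  split_ifs with h1 h2 <;> subst_vars <;> simp_all

private lemma swap_image_of_mem_mem [DecidableEq α] {e f : α} {A : Set α} (he : e ∈ A) (hf : f ∈ A) :
    (Equiv.swap e f) '' A = A := by
  rw [Equiv.image_eq_preimage_symm, Equiv.symm_swap]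
  ext x
  simp only [Set.mem_preimage, Equiv.swap_apply_def]
  split_ifs with h1 h2 <;> subst_vars <;> simp_all

private lemma swap_image_of_mem_left [DecidableEq α] {e f : α} (hef : e ≠ f) {A : Set α}
    (he : e ∈ A) (hf : f ∉ A) :
    (Equiv.swap e f) '' A = insert f (A \ {e}) := by
  rw [Equiv.image_eq_preimage_symm, Equiv.symm_swap]
  ext x
  simp only [Set.mem_preimage, Equiv.swap_apply_def, Set.mem_insert_iff, Set.mem_diff,
    Set.mem_singleton_iff]
  split_ifs with h1 h2 <;> subst_vars <;> simp_all

private lemma swap_image_of_mem_right [DecidableEq α] {e f : α} (hef : e ≠ f) {A : Set α}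
    (he : e ∉ A) (hf : f ∈ A) :
    (Equiv.swap e f) '' A = insert e (A \ {f}) := by
  rw [Equiv.swap_comm]
  exact swap_image_of_mem_left (Ne.symm hef) hf he

private lemma sbo_fix (M : Matroid α) (hsbo : M.StronglyBaseOrderable)
    {I J : Set α} (hI : M.IsBase I) (hJ : M.IsBase J)
    {e : α} (heI : e ∈ I) (heJ : e ∈ J) :
    ∃ π : α → α, Set.BijOn π I J ∧ (∀ K ⊆ I, M.IsBase (π '' K ∪ (I \ K))) ∧ π e = e := by
  classical
  obtain ⟨π, hbij, hprop⟩ := hsbo I J hI hJ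
  obtain ⟨a, haI, hae⟩ : ∃ a ∈ I, π a = e := hbij.surjOn heJ
  by_cases hea : a = e
  · exact ⟨π, hbij, hprop, hea ▸ hae⟩
  set τ := Equiv.swap e a with hτ
  have hτmap : Set.MapsTo τ I I := by
    intro x hx
    rcases eq_or_ne x e with rfl | hxe
    · rw [hτ, Equiv.swap_apply_left]; exact haI
    rcases eq_or_ne x a with rfl | hxa
    · rw [hτ, Equiv.swap_apply_right]; exact heI
    · rwa [hτ, Equiv.swap_apply_of_ne_of_ne hxe hxa]
  have hτI : Set.BijOn τ I I := by
    refine ⟨hτmap, (Equiv.injective τ).injOn, fun y hy => ⟨τ y, hτmap hy, ?_⟩⟩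
    rw [hτ]; exact Equiv.swap_apply_self e a y
  refine ⟨π ∘ τ, hbij.comp hτI, ?_, ?_⟩
  · intro K hK
    rw [Set.image_comp]
    by_cases heK : e ∈ K <;> by_cases haK : a ∈ K
    · rw [show τ '' K = K from swap_image_of_mem_mem heK haK]
      exact hprop K hK
    · -- e ∈ K, a ∉ K : use K \ {e}
      rw [show τ '' K = insert a (K \ {e}) from
        swap_image_of_mem_left (fun h => hea h.symm) heK haK]
      rw [Set.image_insert_eq, hae]
      have hset : insert e (π '' (K \ {e})) ∪ (I \ K)
          = π '' (K \ {e}) ∪ (I \ (K \ {e})) := by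
        ext x
        by_cases hx : x = e <;>
          simp_all [Set.mem_insert_iff, Set.mem_union, Set.mem_diff, Set.mem_singleton_iff] <;>
          tauto
      rw [hset]
      exact hprop _ (Set.diff_subset.trans hK)
    · -- a ∈ K, e ∉ K : use insert e K
      rw [show τ '' K = insert e (K \ {a}) from
        swap_image_of_mem_right (fun h => hea h.symm) heK haK]
      rw [Set.image_insert_eq]
      have hB := hprop (insert e K) (Set.insert_subset heI hK)
      have hKsplit : π '' K = insert e (π '' (K \ {a})) := by
        conv_lhs => rw [show K = insert a (K \ {a}) by
          rw [Set.insert_diff_singleton, Set.insert_eq_self.mpr haK]]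
        rw [Set.image_insert_eq, hae]
      rw [Set.image_insert_eq, hKsplit] at hB
      have hset : insert (π e) (π '' (K \ {a})) ∪ (I \ K)
          = insert (π e) (insert e (π '' (K \ {a}))) ∪ (I \ insert e K) := by
        ext x
        by_cases hx : x = e <;>
          simp_all [Set.mem_insert_iff, Set.mem_union, Set.mem_diff, Set.mem_singleton_iff] <;>
          tauto
      rw [hset]
      exact hB
    · rw [show τ '' K = K from swap_image_of_not_mem heK haK]
      exact hprop K hK
  · show π (τ e) = e
    rw [hτ, Equiv.swap_apply_left, hae]


private lemma parext_id1 {e f : α} (hef : e ≠ f) {I K : Set α} (heI : e ∉ I) (hfK : f ∈ K) :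
    I \ K = (I \ {f} ∪ {e}) \ insert e (K \ {f}) := by
  ext x
  by_cases hx : x = e <;> by_cases hx' : x = f <;>
    simp_all [Set.mem_union, Set.mem_diff, Set.mem_insert_iff, Set.mem_singleton_iff] <;> tauto

private lemma parext_id2 {e f : α} (hef : e ≠ f) {P Q : Set α} (heQ : e ∉ Q) :
    insert f (P \ {e}) ∪ Q = (P ∪ Q) \ {e} ∪ {f} := by
  ext x
  by_cases hx : x = e <;> by_cases hx' : x = f <;>
    simp_all [Set.mem_union, Set.mem_diff, Set.mem_insert_iff, Set.mem_singleton_iff] <;> tauto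

private lemma parext_id3 {e f : α} (hef : e ≠ f) {P I K : Set α}
    (heP : e ∉ P) (heI : e ∉ I) (hfI : f ∈ I) (hfK : f ∉ K) :
    P ∪ (I \ K) = (P ∪ ((I \ {f} ∪ {e}) \ K)) \ {e} ∪ {f} := by
  ext x
  by_cases hx : x = e <;> by_cases hx' : x = f <;>
    simp_all [Set.mem_union, Set.mem_diff, Set.mem_insert_iff, Set.mem_singleton_iff] <;> tauto

private lemma parext_id4 {e f : α} (hef : e ≠ f) {J : Set α} (heJ : e ∉ J) (hfJ : f ∈ J) :
    insert f ((J \ {f} ∪ {e}) \ {e}) = J := by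
  ext x
  by_cases hx : x = e <;> by_cases hx' : x = f <;>
    simp_all [Set.mem_union, Set.mem_diff, Set.mem_insert_iff, Set.mem_singleton_iff] <;> tauto

section ParExt

variable {M N : Matroid α} {S : Set α} {e f : α}

private lemma base_c (hground : M.E = S) (he : e ∈ S) (hf : f ∉ S)
    (hNindep : ∀ I : Set α, N.Indep I ↔
      (I ⊆ S ∧ M.Indep I) ∨
        (I ⊆ S ∪ {f} ∧ f ∈ I ∧ e ∉ I ∧ M.Indep (I \ {f} ∪ {e})))
    {B : Set α} (hB : M.IsBase B) : N.IsBase B := by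
  have hBS : B ⊆ S := hground ▸ hB.subset_ground
  refine Matroid.Indep.isBase_of_maximal ?_ ?_
  · rw [hNindep]; exact Or.inl ⟨hBS, hB.indep⟩
  · intro X hX hBX
    rw [hNindep] at hX
    rcases hX with ⟨hXS, hXi⟩ | ⟨hXS, hfX, heX, hXi⟩
    · exact hB.eq_of_subset_indep hXi hBX
    · exfalso
      have heB : e ∉ B := fun h => heX (hBX h)
      have hind : M.Indep (insert e B) := by
        refine hXi.subset ?_
        intro x hx
        rcases Set.mem_insert_iff.mp hx with rfl | hxB
        · exact Or.inr rfl
        · exact Or.inl ⟨hBX hxB, fun h => hf (hBS ((Set.mem_singleton_iff.mp h) ▸ hxB))⟩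
      exact heB (hB.mem_of_insert_indep hind)

private lemma base_d (hground : M.E = S) (he : e ∈ S) (hf : f ∉ S)
    (hNindep : ∀ I : Set α, N.Indep I ↔
      (I ⊆ S ∧ M.Indep I) ∨
        (I ⊆ S ∪ {f} ∧ f ∈ I ∧ e ∉ I ∧ M.Indep (I \ {f} ∪ {e})))
    {B : Set α} (hB : M.IsBase B) (heB : e ∈ B) : N.IsBase (B \ {e} ∪ {f}) := by
  have hBS : B ⊆ S := hground ▸ hB.subset_ground
  have hef : e ≠ f := fun h => hf (h ▸ he)
  have hfB : f ∉ B := fun h => hf (hBS h)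
  have hfB' : f ∈ B \ {e} ∪ {f} := Or.inr rfl
  have heB' : e ∉ B \ {e} ∪ {f} := by
    rintro (⟨-, h⟩ | h)
    · exact h rfl
    · exact hef h
  have hswap : (B \ {e} ∪ {f}) \ {f} ∪ {e} = B := by
    ext x
    by_cases hx : x = e <;> by_cases hx' : x = f <;>
      simp_all [Set.mem_union, Set.mem_diff, Set.mem_singleton_iff]
  refine Matroid.Indep.isBase_of_maximal ?_ ?_
  · rw [hNindep]; right
    refine ⟨?_, hfB', heB', by rw [hswap]; exact hB.indep⟩
    rintro x (⟨hxB, -⟩ | hx)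
    · exact Or.inl (hBS hxB)
    · exact Or.inr hx
  · intro X hX hB'X
    rw [hNindep] at hX
    have hfX : f ∈ X := hB'X hfB'
    rcases hX with ⟨hXS, -⟩ | ⟨hXS, -, heX, hXi⟩
    · exact absurd (hXS hfX) hf
    · have hsub : B ⊆ X \ {f} ∪ {e} := by
        rw [← hswap]
        rintro x (⟨hx, hxf⟩ | hx)
        · exact Or.inl ⟨hB'X hx, hxf⟩
        · exact Or.inr hx
      have hXB := hB.eq_of_subset_indep hXi hsub
      ext x
      have hq := Set.ext_iff.mp hXB x
      by_cases hx : x = e <;> by_cases hx' : x = f <;>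
        simp_all [Set.mem_union, Set.mem_diff, Set.mem_singleton_iff] <;> tauto

private lemma base_a (hground : M.E = S) (he : e ∈ S) (hf : f ∉ S)
    (hNindep : ∀ I : Set α, N.Indep I ↔
      (I ⊆ S ∧ M.Indep I) ∨
        (I ⊆ S ∪ {f} ∧ f ∈ I ∧ e ∉ I ∧ M.Indep (I \ {f} ∪ {e})))
    {B : Set α} (hB : N.IsBase B) (hfB : f ∉ B) : M.IsBase B := by
  have hBi := hB.indep
  rw [hNindep] at hBi
  rcases hBi with ⟨hBS, hBi⟩ | ⟨-, hfB', -⟩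
  · refine hBi.isBase_of_maximal ?_
    intro X hXi hBX
    refine hB.eq_of_subset_indep ?_ hBX
    rw [hNindep]
    exact Or.inl ⟨hground ▸ hXi.subset_ground, hXi⟩
  · exact absurd hfB' hfB

private lemma base_b (hground : M.E = S) (he : e ∈ S) (hf : f ∉ S)
    (hNindep : ∀ I : Set α, N.Indep I ↔
      (I ⊆ S ∧ M.Indep I) ∨
        (I ⊆ S ∪ {f} ∧ f ∈ I ∧ e ∉ I ∧ M.Indep (I \ {f} ∪ {e})))
    {B : Set α} (hB : N.IsBase B) (hfB : f ∈ B) :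
    e ∉ B ∧ M.IsBase (B \ {f} ∪ {e}) := by
  have hef : e ≠ f := fun h => hf (h ▸ he)
  have hBi := hB.indep
  rw [hNindep] at hBi
  rcases hBi with ⟨hBS, -⟩ | ⟨hBS, -, heB, hBi⟩
  · exact absurd (hBS hfB) hf
  refine ⟨heB, hBi.isBase_of_maximal ?_⟩
  intro X hXi hBX
  have heX : e ∈ X := hBX (Or.inr rfl)
  have hXS : X ⊆ S := hground ▸ hXi.subset_ground
  have hfX : f ∉ X := fun h => hf (hXS h)
  have hYi : N.Indep (X \ {e} ∪ {f}) := by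
    rw [hNindep]; right
    refine ⟨?_, Or.inr rfl, ?_, ?_⟩
    · rintro x (⟨hx, -⟩ | hx)
      · exact Or.inl (hXS hx)
      · exact Or.inr hx
    · rintro (⟨-, h⟩ | h)
      · exact h rfl
      · exact hef h
    · have : (X \ {e} ∪ {f}) \ {f} ∪ {e} = X := by
        ext x
        by_cases hx : x = e <;> by_cases hx' : x = f <;>
          simp_all [Set.mem_union, Set.mem_diff, Set.mem_singleton_iff]
      rwa [this]
  have hBY : B ⊆ X \ {e} ∪ {f} := by
    intro x hx
    by_cases hxf : x = f
    · exact Or.inr hxf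
    · refine Or.inl ⟨hBX (Or.inl ⟨hx, hxf⟩), fun h => heB (h ▸ hx)⟩
  have hBeq := hB.eq_of_subset_indep hYi hBY
  rw [hBeq]
  ext x
  by_cases hx : x = e <;> by_cases hx' : x = f <;>
    simp_all [Set.mem_union, Set.mem_diff, Set.mem_singleton_iff] <;> tauto

end ParExt

theorem stronglyBaseOrderable_parallelExtension
    (M : Matroid α) (S : Set α) (hground : M.E = S)
    (hsbo : M.StronglyBaseOrderable)
    (e : α) (he : e ∈ S) (f : α) (hf : f ∉ S)
    (N : Matroid α) (hNground : N.E = S ∪ {f})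
    (hNindep : ∀ I : Set α, N.Indep I ↔
      (I ⊆ S ∧ M.Indep I) ∨
        (I ⊆ S ∪ {f} ∧ f ∈ I ∧ e ∉ I ∧ M.Indep (I \ {f} ∪ {e}))) :
    N.StronglyBaseOrderable := by
  classical
  have hef : e ≠ f := fun h => hf (h ▸ he)
  set σ := Equiv.swap e f with hσdef
  intro I J hI hJ
  by_cases hfI : f ∈ I <;> by_cases hfJ : f ∈ J
  · -- f ∈ I, f ∈ J
    obtain ⟨heI, hMI'⟩ := base_b hground he hf hNindep hI hfI
    obtain ⟨heJ, hMJ'⟩ := base_b hground he hf hNindep hJ hfJ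
    set I' := I \ {f} ∪ {e} with hI'def
    set J' := J \ {f} ∪ {e} with hJ'def
    have heI' : e ∈ I' := Or.inr rfl
    have heJ' : e ∈ J' := Or.inr rfl
    have hI'S : I' ⊆ S := hground ▸ hMI'.subset_ground
    have hJ'S : J' ⊆ S := hground ▸ hMJ'.subset_ground
    have hfI' : f ∉ I' := fun h => hf (hI'S h)
    have hfJ' : f ∉ J' := fun h => hf (hJ'S h)
    obtain ⟨π₀, hbij, hprop, hfix⟩ := sbo_fix M hsbo hMI' hMJ' heI' heJ'
    have hσI : σ '' I = I' := by
      rw [swap_image_of_mem_right hef heI hfI, hI'def, Set.union_singleton]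
    have hσJ' : σ '' J' = J := by
      rw [swap_image_of_mem_left hef heJ' hfJ']
      exact parext_id4 hef heJ hfJ
    have hσbijI : Set.BijOn σ I I' := by
      have := (Equiv.injective σ).injOn.bijOn_image (s := I)
      rwa [hσI] at this
    have hσbijJ : Set.BijOn σ J' J := by
      have := (Equiv.injective σ).injOn.bijOn_image (s := J')
      rwa [hσJ'] at this
    refine ⟨σ ∘ (π₀ ∘ σ), hσbijJ.comp (hbij.comp hσbijI), ?_⟩
    intro K hK
    rw [Set.image_comp, Set.image_comp]
    have heK : e ∉ K := fun h => heI (hK h)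
    by_cases hfK : f ∈ K
    · rw [swap_image_of_mem_right hef heK hfK]
      set K' := insert e (K \ {f}) with hK'def
      have hK'sub : K' ⊆ I' := Set.insert_subset (Or.inr rfl)
        (fun x hx => Or.inl ⟨hK hx.1, hx.2⟩)
      have hB := hprop K' hK'sub
      have heπ : e ∈ π₀ '' K' := ⟨e, Set.mem_insert _ _, hfix⟩
      have hπS : π₀ '' K' ⊆ J' := by
        rw [← hbij.image_eq]; exact Set.image_mono hK'sub
      have hfπ : f ∉ π₀ '' K' := fun h => hfJ' (hπS h)
      rw [swap_image_of_mem_left hef heπ hfπ]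
      have heI'K' : e ∉ I' \ K' := fun h => h.2 (Set.mem_insert _ _)
      have hset : insert f (π₀ '' K' \ {e}) ∪ (I \ K)
          = (π₀ '' K' ∪ (I' \ K')) \ {e} ∪ {f} := by
        have hIK : I \ K = I' \ K' := parext_id1 hef heI hfK
        rw [hIK]
        exact parext_id2 hef heI'K'
      rw [hset]
      exact base_d hground he hf hNindep hB (Or.inl heπ)
    · rw [swap_image_of_not_mem heK hfK]
      have hKI' : K ⊆ I' := fun x hx => Or.inl ⟨hK hx, fun h => hfK (h ▸ hx)⟩
      have hB := hprop K hKI'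
      have heπK : e ∉ π₀ '' K := by
        rintro ⟨x, hxK, hxe⟩
        have : x = e := hbij.injOn (hKI' hxK) heI' (by rw [hxe, hfix])
        exact heK (this ▸ hxK)
      have hπS : π₀ '' K ⊆ J' := by
        rw [← hbij.image_eq]; exact Set.image_mono hKI'
      have hfπ : f ∉ π₀ '' K := fun h => hfJ' (hπS h)
      rw [swap_image_of_not_mem heπK hfπ]
      have heB : e ∈ π₀ '' K ∪ (I' \ K) := Or.inr ⟨Or.inr rfl, heK⟩
      have hset : π₀ '' K ∪ (I \ K) = (π₀ '' K ∪ (I' \ K)) \ {e} ∪ {f} :=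
        parext_id3 hef heπK heI hfI hfK
      rw [hset]
      exact base_d hground he hf hNindep hB heB
  · -- f ∈ I, f ∉ J
    obtain ⟨heI, hMI'⟩ := base_b hground he hf hNindep hI hfI
    have hMJ := base_a hground he hf hNindep hJ hfJ
    set I' := I \ {f} ∪ {e} with hI'def
    have heI' : e ∈ I' := Or.inr rfl
    have hJS : J ⊆ S := hground ▸ hMJ.subset_ground
    have hσI : σ '' I = I' := by
      rw [swap_image_of_mem_right hef heI hfI, hI'def, Set.union_singleton]
    have hσbijI : Set.BijOn σ I I' := by
      have := (Equiv.injective σ).injOn.bijOn_image (s := I)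
      rwa [hσI] at this
    have main : ∀ π₀ : α → α, Set.BijOn π₀ I' J →
        (∀ K ⊆ I', M.IsBase (π₀ '' K ∪ (I' \ K))) →
        (∀ x ∈ I', π₀ x = e → x = e) →
        ∃ π, Set.BijOn π I J ∧ ∀ K ⊆ I, N.IsBase (π '' K ∪ (I \ K)) := by
      intro π₀ hbij hprop hcond
      refine ⟨π₀ ∘ σ, hbij.comp hσbijI, ?_⟩
      intro K hK
      rw [Set.image_comp]
      have heK : e ∉ K := fun h => heI (hK h)
      by_cases hfK : f ∈ K
      · rw [swap_image_of_mem_right hef heK hfK]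
        set K' := insert e (K \ {f}) with hK'def
        have hK'sub : K' ⊆ I' := Set.insert_subset (Or.inr rfl)
          (fun x hx => Or.inl ⟨hK hx.1, hx.2⟩)
        have hB := hprop K' hK'sub
        have hIK : I \ K = I' \ K' := parext_id1 hef heI hfK
        rw [hIK]
        exact base_c hground he hf hNindep hB
      · rw [swap_image_of_not_mem heK hfK]
        have hKI' : K ⊆ I' := fun x hx => Or.inl ⟨hK hx, fun h => hfK (h ▸ hx)⟩
        have hB := hprop K hKI'
        have heB : e ∈ π₀ '' K ∪ (I' \ K) := Or.inr ⟨Or.inr rfl, heK⟩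
        have heπK : e ∉ π₀ '' K := by
          rintro ⟨x, hxK, hxe⟩
          exact heK ((hcond x (hKI' hxK) hxe) ▸ hxK)
        have hπS : π₀ '' K ⊆ J := by
          rw [← hbij.image_eq]; exact Set.image_mono hKI'
        have hfπ : f ∉ π₀ '' K := fun h => hf (hJS (hπS h))
        have hset : π₀ '' K ∪ (I \ K) = (π₀ '' K ∪ (I' \ K)) \ {e} ∪ {f} :=
          parext_id3 hef heπK heI hfI hfK
        rw [hset]
        exact base_d hground he hf hNindep hB heB
    by_cases heJ : e ∈ J
    · obtain ⟨π₀, hbij, hprop, hfix⟩ := sbo_fix M hsbo hMI' hMJ heI' heJ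
      refine main π₀ hbij hprop ?_
      intro x hx hxe
      exact hbij.injOn hx heI' (by rw [hxe, hfix])
    · obtain ⟨π₀, hbij, hprop⟩ := hsbo I' J hMI' hMJ
      refine main π₀ hbij hprop ?_
      intro x hx hxe
      exact absurd (hxe ▸ hbij.mapsTo hx) heJ
  · -- f ∉ I, f ∈ J
    have hMI := base_a hground he hf hNindep hI hfI
    obtain ⟨heJ, hMJ'⟩ := base_b hground he hf hNindep hJ hfJ
    set J' := J \ {f} ∪ {e} with hJ'def
    have heJ' : e ∈ J' := Or.inr rfl
    have hIS : I ⊆ S := hground ▸ hMI.subset_ground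
    have hJ'S : J' ⊆ S := hground ▸ hMJ'.subset_ground
    have hfJ' : f ∉ J' := fun h => hf (hJ'S h)
    have hσJ' : σ '' J' = J := by
      rw [swap_image_of_mem_left hef heJ' hfJ']
      exact parext_id4 hef heJ hfJ
    have hσbijJ : Set.BijOn σ J' J := by
      have := (Equiv.injective σ).injOn.bijOn_image (s := J')
      rwa [hσJ'] at this
    have main : ∀ π₀ : α → α, Set.BijOn π₀ I J' →
        (∀ K ⊆ I, M.IsBase (π₀ '' K ∪ (I \ K))) →
        (∀ K, K ⊆ I → e ∈ π₀ '' K → e ∉ I \ K) →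
        ∃ π, Set.BijOn π I J ∧ ∀ K ⊆ I, N.IsBase (π '' K ∪ (I \ K)) := by
      intro π₀ hbij hprop hcond
      refine ⟨σ ∘ π₀, hσbijJ.comp hbij, ?_⟩
      intro K hK
      rw [Set.image_comp]
      have hπS : π₀ '' K ⊆ J' := by
        rw [← hbij.image_eq]; exact Set.image_mono hK
      have hfπ : f ∉ π₀ '' K := fun h => hfJ' (hπS h)
      by_cases heπ : e ∈ π₀ '' K
      · rw [swap_image_of_mem_left hef heπ hfπ]
        have hB := hprop K hK
        have heIK := hcond K hK heπ
        have hset : insert f (π₀ '' K \ {e}) ∪ (I \ K)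
            = (π₀ '' K ∪ (I \ K)) \ {e} ∪ {f} := parext_id2 hef heIK
        rw [hset]
        exact base_d hground he hf hNindep hB (Or.inl heπ)
      · rw [swap_image_of_not_mem heπ hfπ]
        exact base_c hground he hf hNindep (hprop K hK)
    by_cases heI : e ∈ I
    · obtain ⟨π₀, hbij, hprop, hfix⟩ := sbo_fix M hsbo hMI hMJ' heI heJ'
      refine main π₀ hbij hprop ?_
      rintro K hK ⟨x, hxK, hxe⟩ hIK
      have : x = e := hbij.injOn (hK hxK) heI (by rw [hxe, hfix])
      exact hIK.2 (this ▸ hxK)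
    · obtain ⟨π₀, hbij, hprop⟩ := hsbo I J' hMI hMJ'
      refine main π₀ hbij hprop ?_
      intro K hK hπ hIK
      exact heI hIK.1
  · -- f ∉ I, f ∉ J
    have hMI := base_a hground he hf hNindep hI hfI
    have hMJ := base_a hground he hf hNindep hJ hfJ
    obtain ⟨π, hbij, hprop⟩ := hsbo I J hMI hMJ
    exact ⟨π, hbij, fun K hK => base_c hground he hf hNindep (hprop K hK)⟩
end

section
/- Let M be a strongly base orderable matroid on ground set S and let k be a nonnegative integer. Let N be a matroid on ground set S whose independent sets are exactly the sets I ⊆ S that are independent in M and satisfy |I| ≤ k. Then N is strongly base orderable. (That is, strong base orderability is closed under truncation.) -/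
variable {α : Type*}

theorem stronglyBaseOrderable_truncation
    (M : Matroid α) (S : Set α) (hground : M.E = S)
    (hsbo : M.StronglyBaseOrderable)
    (k : ℕ)
    (N : Matroid α) (hNground : N.E = S)
    (hNindep : ∀ I : Set α, N.Indep I ↔ M.Indep I ∧ I.encard ≤ k) :
    N.StronglyBaseOrderable := by
  classical
  rcases isEmpty_or_nonempty α with hα | hα
  · -- trivial case: empty type
    intro I J hI hJ
    have hIe : I = ∅ := Set.eq_empty_of_isEmpty I
    have hJe : J = ∅ := Set.eq_empty_of_isEmpty J
    refine ⟨id, ?_, ?_⟩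
    · rw [hIe, hJe]; exact Set.bijOn_empty id
    · intro K hK
      have hKe : K = ∅ := Set.eq_empty_of_isEmpty K
      have : id '' K ∪ (I \ K) = I := by
        rw [hKe, Set.image_empty, Set.empty_union, Set.diff_empty]
      rwa [this]
  intro I J hI hJ
  have hIiN : N.Indep I := hI.indep
  have hJiN : N.Indep J := hJ.indep
  obtain ⟨hMI, hIk⟩ := (hNindep I).mp hIiN
  obtain ⟨hMJ, hJk⟩ := (hNindep J).mp hJiN
  have hIfin : I.Finite :=
    Set.encard_ne_top_iff.mp (hIk.trans_lt (WithTop.coe_lt_top k)).ne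
  have hIJcard : I.encard = J.encard := hI.encard_eq_encard_of_isBase hJ
  obtain ⟨BI, hBI, hIBI⟩ := hMI.exists_isBase_superset
  obtain ⟨BJ, hBJ, hJBJ, hBJsub⟩ := hMJ.exists_isBase_subset_union_isBase hBI
  obtain ⟨π, hπ, hπK⟩ := hsbo BI BJ hBI hBJ
  -- fixed point lemma
  have hfix : ∀ x ∈ BI, π x ∈ BI → π x = x := by
    intro x hx hpx
    by_contra hne
    have hbase := hπK {x} (Set.singleton_subset_iff.mpr hx)
    have heq : π '' {x} ∪ (BI \ {x}) = BI \ {x} := by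
      rw [Set.image_singleton, Set.singleton_union, Set.insert_eq_self]
      exact ⟨hpx, hne⟩
    rw [heq] at hbase
    have h2 := hbase.eq_of_subset_isBase hBI Set.diff_subset
    have hx' : x ∈ BI \ {x} := by rw [h2]; exact hx
    exact hx'.2 rfl
  set A : Set α := {x | x ∈ I ∧ π x ∉ J} with hA_def
  set B : Set α := {x | x ∈ BI ∧ x ∉ I ∧ π x ∈ J} with hB_def
  have hAI : A ⊆ I := fun x hx => hx.1
  have hBsub : B ⊆ BI \ I := fun x hx => ⟨hx.1, hx.2.1⟩
  -- the set of elements of BI mapped into J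
  have hPbij : Set.BijOn π {x | x ∈ BI ∧ π x ∈ J} J := by
    refine ⟨fun x (hx : x ∈ BI ∧ π x ∈ J) => hx.2, hπ.injOn.mono (fun x (hx : x ∈ BI ∧ π x ∈ J) => hx.1), ?_⟩
    intro j hj
    obtain ⟨x, hx, hxj⟩ := hπ.surjOn (hJBJ hj)
    exact ⟨x, ⟨hx, hxj ▸ hj⟩, hxj⟩
  have hPJ : Set.encard {x | x ∈ BI ∧ π x ∈ J} = J.encard := by
    have h1 : (π '' {x | x ∈ BI ∧ π x ∈ J}).encard = {x | x ∈ BI ∧ π x ∈ J}.encard :=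
      (hπ.injOn.mono (fun x (hx : x ∈ BI ∧ π x ∈ J) => hx.1)).encard_image
    rw [hPbij.image_eq] at h1
    exact h1.symm
  have hPeq : {x | x ∈ BI ∧ π x ∈ J} = (I \ A) ∪ B := by
    ext x
    simp only [Set.mem_setOf_eq, Set.mem_union, Set.mem_diff, hA_def, hB_def]
    constructor
    · rintro ⟨hx, hj⟩
      by_cases hxI : x ∈ I
      · exact Or.inl ⟨hxI, fun h => h.2 hj⟩
      · exact Or.inr ⟨hx, hxI, hj⟩
    · rintro (⟨hxI, hnA⟩ | ⟨h1, h2, h3⟩)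
      · refine ⟨hIBI hxI, ?_⟩
        by_contra h
        exact hnA ⟨hxI, h⟩
      · exact ⟨h1, h3⟩
  have hdisjIA_B : Disjoint (I \ A) B := by
    rw [Set.disjoint_left]
    intro x hx hxB
    exact hxB.2.1 hx.1
  have hcard1 : (I \ A).encard + B.encard = J.encard := by
    rw [← Set.encard_union_eq hdisjIA_B, ← hPeq, hPJ]
  have hcard2 : (I \ A).encard + A.encard = I.encard :=
    Set.encard_diff_add_encard_of_subset hAI
  have hIAfin : (I \ A).encard ≠ ⊤ :=
    Set.encard_ne_top_iff.mpr (hIfin.subset Set.diff_subset)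
  have hAB : A.encard = B.encard := by
    apply WithTop.add_left_cancel hIAfin
    show (I \ A).encard + A.encard = (I \ A).encard + B.encard
    rw [hcard2, hIJcard, ← hcard1]
  have hAfin : A.Finite := hIfin.subset hAI
  obtain ⟨e, he⟩ := hAfin.exists_bijOn_of_encard_eq hAB
  set σ : α → α := fun x => if x ∈ A then π (e x) else π x with hσ_def
  have hσA : ∀ x ∈ A, σ x = π (e x) := fun x hx => if_pos hx
  have hσnA : ∀ x, x ∉ A → σ x = π x := fun x hx => if_neg hx
  have hσbij : Set.BijOn σ I J := by
    refine ⟨?_, ?_, ?_⟩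
    · intro x hx
      by_cases hxA : x ∈ A
      · rw [hσA x hxA]; exact (he.mapsTo hxA).2.2
      · rw [hσnA x hxA]
        by_contra h
        exact hxA ⟨hx, h⟩
    · intro x hx y hy hxy
      by_cases hxA : x ∈ A <;> by_cases hyA : y ∈ A
      · rw [hσA x hxA, hσA y hyA] at hxy
        exact he.injOn hxA hyA
          (hπ.injOn (he.mapsTo hxA).1 (he.mapsTo hyA).1 hxy)
      · rw [hσA x hxA, hσnA y hyA] at hxy
        exact absurd ((hπ.injOn (he.mapsTo hxA).1 (hIBI hy) hxy) ▸ hy)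
          (he.mapsTo hxA).2.1
      · rw [hσnA x hxA, hσA y hyA] at hxy
        exact absurd ((hπ.injOn (hIBI hx) (he.mapsTo hyA).1 hxy) ▸ hx)
          (he.mapsTo hyA).2.1
      · rw [hσnA x hxA, hσnA y hyA] at hxy
        exact hπ.injOn (hIBI hx) (hIBI hy) hxy
    · intro j hj
      obtain ⟨x, hx, hxj⟩ := hπ.surjOn (hJBJ hj)
      by_cases hxI : x ∈ I
      · have hxA : x ∉ A := fun h => h.2 (hxj ▸ hj)
        exact ⟨x, hxI, by rw [hσnA x hxA, hxj]⟩
      · have hxB : x ∈ B := ⟨hx, hxI, hxj ▸ hj⟩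
        obtain ⟨a, haA, hae⟩ := he.surjOn hxB
        exact ⟨a, hAI haA, by rw [hσA a haA, hae, hxj]⟩
  refine ⟨σ, hσbij, ?_⟩
  intro K hKI
  set K' : Set α := (K \ A) ∪ e '' (K ∩ A) with hK'_def
  have hK'BI : K' ⊆ BI := by
    rintro x (hx | ⟨y, hy, rfl⟩)
    · exact hIBI (hKI hx.1)
    · exact (he.mapsTo hy.2).1
  have hσK : σ '' K = π '' K' := by
    have h1 : σ '' (K \ A) = π '' (K \ A) :=
      Set.image_congr (fun x hx => hσnA x hx.2)
    have h2 : σ '' (K ∩ A) = π '' (e '' (K ∩ A)) := by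
      rw [← Set.image_comp]
      exact Set.image_congr (fun x hx => hσA x hx.2)
    calc σ '' K = σ '' (K \ A ∪ K ∩ A) := by rw [Set.diff_union_inter]
      _ = σ '' (K \ A) ∪ σ '' (K ∩ A) := Set.image_union σ _ _
      _ = π '' (K \ A) ∪ π '' (e '' (K ∩ A)) := by rw [h1, h2]
      _ = π '' K' := (Set.image_union π _ _).symm
  have hMbase : M.IsBase (π '' K' ∪ (BI \ K')) := hπK K' hK'BI
  have hIKsub : I \ K ⊆ BI \ K' := by
    intro x hx
    refine ⟨hIBI hx.1, ?_⟩
    rintro (h | ⟨y, hy, rfl⟩)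
    · exact hx.2 h.1
    · exact (he.mapsTo hy.2).2.1 hx.1
  have hsubset : σ '' K ∪ (I \ K) ⊆ π '' K' ∪ (BI \ K') := by
    rw [hσK]
    exact Set.union_subset_union_right _ hIKsub
  have hMX : M.Indep (σ '' K ∪ (I \ K)) := hMbase.indep.subset hsubset
  have hdisj : Disjoint (σ '' K) (I \ K) := by
    rw [Set.disjoint_left]
    rintro x hxσ hxIK
    rw [hσK] at hxσ
    obtain ⟨z, hz, rfl⟩ := hxσ
    have hzfix : π z = z := hfix z (hK'BI hz) (hIBI hxIK.1)
    rw [hzfix] at hxIK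
    rcases hz with h | ⟨y, hy, rfl⟩
    · exact hxIK.2 h.1
    · exact (he.mapsTo hy.2).2.1 hxIK.1
  have hcard : (σ '' K ∪ (I \ K)).encard = I.encard := by
    rw [Set.encard_union_eq hdisj, (hσbij.injOn.mono hKI).encard_image,
      add_comm, Set.encard_diff_add_encard_of_subset hKI]
  have hNX : N.Indep (σ '' K ∪ (I \ K)) :=
    (hNindep _).mpr ⟨hMX, hcard ▸ hIk⟩
  obtain ⟨B', hB', hXB'⟩ := hNX.exists_isBase_superset
  have hB'card : B'.encard = I.encard := hB'.encard_eq_encard_of_isBase hI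
  have hB'fin : B'.Finite := hI.finite_of_finite hIfin hB'
  have hXeq : σ '' K ∪ (I \ K) = B' :=
    hB'fin.eq_of_subset_of_encard_le' hXB' (by rw [hB'card, hcard])
  rwa [hXeq]
end
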